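/- Let M be a rank-r elementary split matroid with non-redundant representation by hyperedges H_1, …, H_q and bounds r_1, …, r_q. If F ⊆ S has |F| = r and F is both H_i-tight and H_j-tight for distinct indices i and j, then H_i ∩ H_j ⊆ F ⊆ H_i ∪ H_j. -/
import Mathlib


/-- In a rank-`r` elementary split matroid with a non-redundant representation, a set `F` of
size `r` that is both `Hᵢ`- and `Hⱼ`-tight satisfies `Hᵢ ∩ Hⱼ ⊆ F ⊆ Hᵢ ∪ Hⱼ`. -/
theorem tight_two_hyperedges {α : Type*} (M : Matroid α) (hfin : M.E.Finite)
    (r q : ℕ) (H : Fin q → Set α) (rr : Fin q → ℕ)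
    (hHS : ∀ i, H i ⊆ M.E)
    (h1 : ∀ i j : Fin q, i < j → (H i ∩ H j).ncard + r ≤ rr i + rr j)
    (h2 : ∀ i : Fin q, r ≤ (M.E \ H i).ncard + rr i)
    (h3 : ∀ i : Fin q, rr i + 1 ≤ r)
    (h4 : ∀ i : Fin q, rr i + 1 ≤ (H i).ncard)
    (hInd : ∀ X : Set α, M.Indep X ↔ X ⊆ M.E ∧ X.ncard ≤ r ∧ ∀ i, (X ∩ H i).ncard ≤ rr i)
    (F : Set α) (hF : F ⊆ M.E) (hFcard : F.ncard = r)
    (i j : Fin q) (hij : i ≠ j)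
    (htighti : (F ∩ H i).ncard = rr i) (htightj : (F ∩ H j).ncard = rr j) :
    H i ∩ H j ⊆ F ∧ F ⊆ H i ∪ H j := by
  have hd : (H i ∩ H j).ncard + r ≤ rr i + rr j := by
    rcases lt_or_gt_of_ne hij with h | h
    · exact h1 i j h
    · have := h1 j i h
      rwa [Set.inter_comm, add_comm (rr j)] at this
  have hFfin : F.Finite := hfin.subset hF
  have hHifin : (H i).Finite := hfin.subset (hHS i)
  have hHjfin : (H j).Finite := hfin.subset (hHS j)
  have hAfin : (F ∩ H i).Finite := hFfin.inter_of_left _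
  have hBfin : (F ∩ H j).Finite := hFfin.inter_of_left _
  -- inclusion-exclusion
  have hIE : (F ∩ H i ∪ F ∩ H j).ncard + (F ∩ H i ∩ (F ∩ H j)).ncard
      = (F ∩ H i).ncard + (F ∩ H j).ncard :=
    Set.ncard_union_add_ncard_inter _ _ hAfin hBfin
  have hUsub : F ∩ H i ∪ F ∩ H j ⊆ F := by
    rintro x (⟨hx, _⟩ | ⟨hx, _⟩) <;> exact hx
  have hU : (F ∩ H i ∪ F ∩ H j).ncard ≤ r := by
    rw [← hFcard]; exact Set.ncard_le_ncard hUsub hFfin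
  have hIsub : F ∩ H i ∩ (F ∩ H j) ⊆ H i ∩ H j := by
    rintro x ⟨⟨_, h1x⟩, ⟨_, h2x⟩⟩; exact ⟨h1x, h2x⟩
  have hI : (F ∩ H i ∩ (F ∩ H j)).ncard ≤ (H i ∩ H j).ncard :=
    Set.ncard_le_ncard hIsub (hHifin.inter_of_left _)
  -- equalities forced
  have hIeq : (F ∩ H i ∩ (F ∩ H j)).ncard = (H i ∩ H j).ncard := by omega
  have hUeq : (F ∩ H i ∪ F ∩ H j).ncard = r := by omega
  constructor
  · have := Set.eq_of_subset_of_ncard_le hIsub (le_of_eq hIeq.symm)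
      (hHifin.inter_of_left _)
    intro x hx
    rw [← this] at hx
    exact hx.1.1
  · have heq : F ∩ H i ∪ F ∩ H j = F :=
      Set.eq_of_subset_of_ncard_le hUsub (by omega) hFfin
    intro x hx
    rw [← heq] at hx
    rcases hx with ⟨_, h⟩ | ⟨_, h⟩
    · exact Or.inl h
    · exact Or.inr h
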